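/- arXiv:1707.03947 — 3 statements merged into one kernel-verified Lean document; each statement's English description precedes it below -/
import Mathlib

section
/- There exists a set R ⊆ ℕ such that both R and its complement ℕ \ R are canonically immune (R is bi-canonically immune). -/
/-- The `e`-th computably enumerable set. -/
def WSet (e : ℕ) : Set ℕ := {n | ((Denumerable.ofNat Nat.Partrec.Code e).eval n).Dom}

/-- A canonical numbering: a computable surjection onto the finite subsets of `ℕ`. -/
def CanonicalNumbering (D : ℕ → Finset ℕ) : Prop := Computable D ∧ Function.Surjective D

/-- `R` is canonically immune with modulus of immunity `h`. -/
def CanonImmuneMod (R : Set ℕ) (h : ℕ → ℕ) : Prop :=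
  R.Infinite ∧ ∀ D : ℕ → Finset ℕ, CanonicalNumbering D →
    ∀ᶠ i in Filter.atTop, ↑(D i) ⊆ R → (D i).card ≤ h i

/-- `R` is canonically immune. -/
def CanonicallyImmune (R : Set ℕ) : Prop :=
  ∃ h : ℕ → ℕ, Computable h ∧ CanonImmuneMod R h

/-- `R` is Δ⁰₂ (limit computable). -/
def Delta02 (R : Set ℕ) : Prop :=
  ∃ f : ℕ → ℕ → Bool, Computable₂ f ∧
    ∀ n, ∀ᶠ s in Filter.atTop, (f s n = true ↔ n ∈ R)

/-- Partial functions recursive in an oracle `O : ℕ → ℕ`. -/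
inductive OracleRecursiveIn (O : ℕ → ℕ) : (ℕ →. ℕ) → Prop
  | zero : OracleRecursiveIn O fun _ => 0
  | succ : OracleRecursiveIn O fun n => Part.some (n + 1)
  | left : OracleRecursiveIn O fun n => Part.some (Nat.unpair n).1
  | right : OracleRecursiveIn O fun n => Part.some (Nat.unpair n).2
  | oracle : OracleRecursiveIn O fun n => Part.some (O n)
  | pair {f g} : OracleRecursiveIn O f → OracleRecursiveIn O g →
      OracleRecursiveIn O fun n => Nat.pair <$> f n <*> g n
  | comp {f g} : OracleRecursiveIn O f → OracleRecursiveIn O g →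
      OracleRecursiveIn O fun n => g n >>= f
  | prec {f g} : OracleRecursiveIn O f → OracleRecursiveIn O g →
      OracleRecursiveIn O (Nat.unpaired fun a n =>
        n.rec (f a) fun y IH => do let i ← IH; g (Nat.pair a (Nat.pair y i)))
  | rfind {f} : OracleRecursiveIn O f →
      OracleRecursiveIn O fun a => Nat.rfind fun n => (fun m => m = 0) <$> f (Nat.pair a n)

open Classical in
/-- Characteristic function of a set of naturals. -/
noncomputable def chi (A : Set ℕ) : ℕ → ℕ := fun n => if n ∈ A then 1 else 0

/-- `A` is Turing reducible to the oracle `O`. -/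
def TuringReducibleTo (A : Set ℕ) (O : ℕ → ℕ) : Prop :=
  OracleRecursiveIn O fun n => Part.some (chi A n)

/-- `A` is Turing reducible to the set `B`. -/
def TuringReducibleSet (A B : Set ℕ) : Prop := TuringReducibleTo A (chi B)

/-- The oracle given by a real `G ∈ 2^ω`. -/
def oracleOf (G : ℕ → Bool) : ℕ → ℕ := fun n => cond (G n) 1 0

/-- `S` is computably enumerable relative to the real `G`. -/
def CEIn (G : ℕ → Bool) (S : Set ℕ) : Prop :=
  ∃ f : ℕ →. ℕ, OracleRecursiveIn (oracleOf G) f ∧ S = {n | (f n).Dom}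

/-- The length-`n` initial segment of a real. -/
def initSeg (G : ℕ → Bool) (n : ℕ) : List Bool := List.ofFn fun i : Fin n => G i

/-- A Σ⁰₂ set of binary strings. -/
def Sigma02Strings (X : Set (List Bool)) : Prop :=
  ∃ p : List Bool → ℕ → ℕ → Bool,
    (Computable fun x : List Bool × ℕ × ℕ => p x.1 x.2.1 x.2.2) ∧
    X = {σ | ∃ m, ∀ k, p σ m k = true}

/-- A (Cohen) 2-generic real. -/
def TwoGeneric (G : ℕ → Bool) : Prop :=
  ∀ X : Set (List Bool), Sigma02Strings X →
    (∃ n, initSeg G n ∈ X) ∨ (∃ n, ∀ τ, initSeg G n <+: τ → τ ∉ X)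

/-- A computably enumerable set of binary strings. -/
def CEStrings (X : Set (List Bool)) : Prop :=
  ∃ p : List Bool → ℕ → Bool, Computable₂ p ∧ X = {σ | ∃ s, p σ s = true}

/-- A dense set of binary strings. -/
def DenseStrings (X : Set (List Bool)) : Prop := ∀ σ, ∃ τ, σ <+: τ ∧ τ ∈ X

/-- A weakly 1-generic real. -/
def Weakly1Generic (G : ℕ → Bool) : Prop :=
  ∀ X : Set (List Bool), CEStrings X → DenseStrings X → ∃ n, initSeg G n ∈ X

/-- A hyperimmune set: infinite and its increasing enumeration (principal function)
is not dominated by any computable function. -/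
def Hyperimmune (R : Set ℕ) : Prop :=
  R.Infinite ∧ ∀ f : ℕ → ℕ, Computable f →
    ∃ᶠ n in Filter.atTop, f n < Nat.nth (· ∈ R) n

/-- A (computable) Mathias condition `[a, A]`. -/
structure MathiasCond where
  a : Finset ℕ
  A : Set ℕ
  infinite : A.Infinite
  comp : ComputablePred (· ∈ A)
  lt : ∀ x ∈ a, ∀ y ∈ A, x < y

/-- `c'` extends `c` as a Mathias condition. -/
def MathiasCond.Extends (c' c : MathiasCond) : Prop :=
  c.a ⊆ c'.a ∧ (↑c'.a \ ↑c.a : Set ℕ) ⊆ c.A ∧ c'.A ⊆ c.A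

/-- A dense family of Mathias conditions. -/
def MathiasDense (𝒳 : Set MathiasCond) : Prop := ∀ c, ∃ c' ∈ 𝒳, c'.Extends c

/-- `R ∈ [a, A]`. -/
def MathiasCond.Mem (c : MathiasCond) (R : Set ℕ) : Prop :=
  ↑c.a ⊆ R ∧ R ⊆ ↑c.a ∪ c.A

/-- `R` meets the family `𝒳` of Mathias conditions. -/
def Meets (R : Set ℕ) (𝒳 : Set MathiasCond) : Prop := ∃ c ∈ 𝒳, c.Mem R

/-- The arithmetical sets of naturals: closure of the computable sets under
complementation and projection. -/
inductive Arithmetical : Set ℕ → Prop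
  | of_computable {S : Set ℕ} : ComputablePred (· ∈ S) → Arithmetical S
  | compl {S : Set ℕ} : Arithmetical S → Arithmetical {n | n ∉ S}
  | proj {S : Set ℕ} : Arithmetical S → Arithmetical {n | ∃ m, Nat.pair n m ∈ S}

open Classical in
/-- `n` codes the Mathias condition `c`: its first component is the canonical code of the
finite set and its second component is an index for the characteristic function of `A`. -/
noncomputable def CondCode (n : ℕ) (c : MathiasCond) : Prop :=
  n.unpair.1 = Encodable.encode c.a ∧
  ∀ x, ((Denumerable.ofNat Nat.Partrec.Code n.unpair.2)).eval x = Part.some (if x ∈ c.A then 1 else 0)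

/-- The set of codes of members of `𝒳`. -/
def CodesOf (𝒳 : Set MathiasCond) : Set ℕ := {n | ∃ c ∈ 𝒳, CondCode n c}

/-- A Mathias generic real: one meeting every arithmetically definable dense family
of Mathias conditions. -/
def MathiasGeneric (R : Set ℕ) : Prop :=
  ∀ 𝒳 : Set MathiasCond, Arithmetical (CodesOf 𝒳) → MathiasDense 𝒳 → Meets R 𝒳

/-- A Σ⁰₃ set of naturals. -/
def Sigma03Set (S : Set ℕ) : Prop :=
  ∃ p : ℕ → ℕ → ℕ → ℕ → Bool,
    (Computable fun x : ℕ × ℕ × ℕ × ℕ => p x.1 x.2.1 x.2.2.1 x.2.2.2) ∧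
    S = {n | ∃ a, ∀ b, ∃ c, p n a b c = true}

/-- A Mathias 3-generic real. -/
def Mathias3Generic (R : Set ℕ) : Prop :=
  ∀ 𝒳 : Set MathiasCond, Sigma03Set (CodesOf 𝒳) → MathiasDense 𝒳 → Meets R 𝒳

/-- An effectively immune set. -/
def EffectivelyImmune (Q : Set ℕ) : Prop :=
  Q.Infinite ∧ ∃ h : ℕ → ℕ, Computable h ∧
    ∀ e, WSet e ⊆ Q → (WSet e).Finite ∧ (WSet e).ncard ≤ h e

/-- The basic cylinder of 2^ω determined by the finite string `σ`. -/
def Cyl (σ : List Bool) : Set (ℕ → Bool) := {G | ∀ i : Fin σ.length, G i = σ.get i}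

/-- The open subset of 2^ω generated by a set of strings. -/
def OpenFrom (P : Set (List Bool)) : Set (ℕ → Bool) := ⋃ σ ∈ P, Cyl σ

/-- A uniformly c.e. sequence of sets of strings. -/
def UniformlyCE (P : ℕ → Set (List Bool)) : Prop :=
  ∃ f : ℕ → List Bool → ℕ → Bool,
    (Computable fun x : ℕ × List Bool × ℕ => f x.1 x.2.1 x.2.2) ∧
    ∀ n σ, σ ∈ P n ↔ ∃ s, f n σ s = true

/-- `μ` is the uniform (fair-coin) product measure on 2^ω: every basic cylinder
determined by a string of length `l` has measure `2⁻ˡ`. -/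
def IsFairCoin (μ : MeasureTheory.Measure (ℕ → Bool)) : Prop :=
  ∀ σ : List Bool, μ (Cyl σ) = (2 ^ σ.length : ENNReal)⁻¹

/-- A Schnorr test with respect to the measure `μ`: uniformly c.e. open sets with
uniformly computable measures bounded by `2^{-n}`. -/
def SchnorrTest (μ : MeasureTheory.Measure (ℕ → Bool)) (U : ℕ → Set (ℕ → Bool)) : Prop :=
  (∃ P : ℕ → Set (List Bool), UniformlyCE P ∧ ∀ n, U n = OpenFrom (P n)) ∧
  (∃ q : ℕ → ℕ → ℚ, Computable₂ q ∧
    ∀ n k, |(q n k : ℝ) - (μ (U n)).toReal| ≤ (2 : ℝ)⁻¹ ^ k) ∧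
  ∀ n, μ (U n) ≤ (2 ^ n : ENNReal)⁻¹

/-- A Schnorr random real (with respect to the fair-coin measure `μ`). -/
def SchnorrRandom (μ : MeasureTheory.Measure (ℕ → Bool)) (G : ℕ → Bool) : Prop :=
  ∀ U : ℕ → Set (ℕ → Bool), SchnorrTest μ U → G ∉ ⋂ n, U n

open Classical in
/-- The characteristic sequence of a set of naturals, as a point of 2^ω. -/
noncomputable def chiB (R : Set ℕ) : ℕ → Bool := fun n => decide (n ∈ R)


open MeasureTheory TopologicalSpace Filter

noncomputable def mu : Measure (ℕ → ZMod 2) := Measure.addHaarMeasure (⊤ : PositiveCompacts (ℕ → ZMod 2))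

def cyl (F : Finset ℕ) (p : ℕ → ZMod 2) : Set (ℕ → ZMod 2) := {x | ∀ n ∈ F, x n = p n}

lemma cyl_measurable (F : Finset ℕ) (p : ℕ → ZMod 2) : MeasurableSet (cyl F p) := by
  have : cyl F p = ⋂ n ∈ F, (fun x : ℕ → ZMod 2 => x n) ⁻¹' {p n} := by
    ext x; simp [cyl]
  rw [this]
  exact MeasurableSet.biInter F.countable_toSet
    (fun n _ => measurable_pi_apply n (measurableSet_singleton _))

lemma mu_univ : mu Set.univ = 1 := by
  have := Measure.addHaarMeasure_self (K₀ := (⊤ : PositiveCompacts (ℕ → ZMod 2)))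
  simpa [mu] using this

instance : mu.IsAddLeftInvariant := by
  unfold mu; infer_instance

lemma mu_cyl (F : Finset ℕ) (p : ℕ → ZMod 2) : mu (cyl F p) = 2⁻¹ ^ F.card := by
  induction F using Finset.induction generalizing p with
  | empty => simp [cyl, mu_univ]
  | @insert a F ha ih =>
    set p' := Function.update p a (p a + 1) with hp'
    have hsplit : cyl F p = cyl (insert a F) p ∪ cyl (insert a F) p' := by
      ext x
      constructor
      · intro hx
        by_cases h : x a = p a
        · left; intro n hn
          rcases Finset.mem_insert.1 hn with rfl | hn
          · exact h
          · exact hx n hn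
        · right; intro n hn
          rcases Finset.mem_insert.1 hn with rfl | hnF
          · have : ∀ v w : ZMod 2, v ≠ w → v = w + 1 := by decide
            rw [hp', Function.update_self]
            exact this _ _ h
          · rw [hp', Function.update_of_ne (by intro h; subst h; exact ha hnF)]
            exact hx n hnF
      · rintro (hx | hx) n hn
        · exact hx n (Finset.mem_insert_of_mem hn)
        · have hnF := hn
          have := hx n (Finset.mem_insert_of_mem hnF)
          rwa [hp', Function.update_of_ne (by intro h; subst h; exact ha hnF)] at this
    have hdisj : Disjoint (cyl (insert a F) p) (cyl (insert a F) p') := by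
      rw [Set.disjoint_left]
      intro x hx hx'
      have h1 := hx a (Finset.mem_insert_self a F)
      have h2 := hx' a (Finset.mem_insert_self a F)
      rw [hp', Function.update_self] at h2
      have : ∀ v : ZMod 2, v + 1 ≠ v := by decide
      exact this (p a) (h2 ▸ h1 ▸ rfl)
    -- translation invariance: the two halves have the same measure
    have htrans : mu (cyl (insert a F) p') = mu (cyl (insert a F) p) := by
      have key : (fun x : ℕ → ZMod 2 => (fun n => if n = a then (1 : ZMod 2) else 0) + x) ⁻¹' (cyl (insert a F) p') = cyl (insert a F) p := by
        ext x
        simp only [Set.mem_preimage, cyl, Set.mem_setOf_eq, Pi.add_apply]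
        have key2 : ∀ v w : ZMod 2, 1 + v = w + 1 ↔ v = w := by decide
        constructor
        · intro h n hn
          have := h n hn
          rcases eq_or_ne n a with rfl | hne
          · rw [if_pos rfl, hp', Function.update_self, key2] at this
            exact this
          · simpa [if_neg hne, hp', Function.update_of_ne hne] using this
        · intro h n hn
          have := h n hn
          rcases eq_or_ne n a with rfl | hne
          · rw [if_pos rfl, hp', Function.update_self, key2]
            exact this
          · simp [if_neg hne, hp', Function.update_of_ne hne, this]
      rw [← key, measure_preimage_add]
    have hadd : mu (cyl F p) = mu (cyl (insert a F) p) + mu (cyl (insert a F) p') := by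
      rw [hsplit, measure_union hdisj (cyl_measurable _ _)]
    rw [htrans, ← two_mul, ih p] at hadd
    have h2 : (2 : ENNReal) ≠ 0 := by norm_num
    have h2' : (2 : ENNReal) ≠ ⊤ := by norm_num
    rw [Finset.card_insert_of_notMem ha, pow_succ, mul_comm ((2:ENNReal)⁻¹ ^ F.card) 2⁻¹]
    rw [hadd, ← mul_assoc, ENNReal.inv_mul_cancel h2 h2', one_mul]


lemma badD_null (D : ℕ → Finset ℕ) (v : ZMod 2) :
    mu {x | ({i | i < (D i).card ∧ ∀ n ∈ D i, x n = v}).Infinite} = 0 := by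
  classical
  set s : ℕ → Set (ℕ → ZMod 2) :=
    fun i => if i < (D i).card then cyl (D i) (fun _ => v) else ∅ with hs
  have hbound : ∀ i, mu (s i) ≤ 2⁻¹ ^ i := by
    intro i
    simp only [hs]
    split_ifs with h
    · rw [mu_cyl]
      exact pow_le_pow_of_le_one (by positivity) (ENNReal.inv_le_one.2 one_le_two) h.le
    · simp
  have htsum : (∑' i, mu (s i)) ≠ ⊤ := by
    refine ne_top_of_le_ne_top ?_ (ENNReal.tsum_le_tsum hbound)
    rw [ENNReal.tsum_geometric]
    simp [ENNReal.one_sub_inv_two]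
  have hae := ae_finite_setOf_mem (μ := mu) htsum
  rw [ae_iff] at hae
  have : {x : ℕ → ZMod 2 | ({i | i < (D i).card ∧ ∀ n ∈ D i, x n = v}).Infinite} ⊆
      {x | ¬ ({i | x ∈ s i}).Finite} := by
    intro x hx hfin
    apply hx
    refine hfin.subset ?_
    intro i hi
    simp only [Set.mem_setOf_eq] at hi ⊢
    rw [hs]
    simp only [hi.1, if_true]
    exact fun n hn => hi.2 n hn
  exact measure_mono_null this hae

lemma finBad_null (v : ZMod 2) : mu {x | ({n | x n = v}).Finite} = 0 := by
  classical
  have hsub : {x : ℕ → ZMod 2 | ({n | x n = v}).Finite} ⊆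
      ⋃ N : ℕ, {x : ℕ → ZMod 2 | ∀ n, N ≤ n → x n = v + 1} := by
    intro x hx
    obtain ⟨N, hN⟩ := hx.bddAbove
    refine Set.mem_iUnion.2 ⟨N + 1, fun n hn => ?_⟩
    have hne : x n ≠ v := by
      intro h
      exact absurd (hN h) (by omega)
    have fact : ∀ v w : ZMod 2, w ≠ v → w = v + 1 := by decide
    exact fact v (x n) hne
  refine measure_mono_null hsub (measure_iUnion_null fun N => ?_)
  by_contra h
  obtain ⟨k, hk⟩ := ENNReal.exists_inv_two_pow_lt h
  have hsub2 : {x : ℕ → ZMod 2 | ∀ n, N ≤ n → x n = v + 1} ⊆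
      cyl (Finset.Ico N (N + k)) (fun _ => v + 1) := by
    intro x hx n hn
    exact hx n (Finset.mem_Ico.1 hn).1
  have := measure_mono (μ := mu) hsub2
  rw [mu_cyl, Nat.card_Ico] at this
  simp only [Nat.add_sub_cancel_left] at this
  exact absurd (this.trans_lt hk) (lt_irrefl _)

lemma countable_computable : {D : ℕ → Finset ℕ | Computable D}.Countable := by
  rw [Set.countable_iff_exists_injective]
  have hex : ∀ D : {D : ℕ → Finset ℕ | Computable D}, ∃ c : Nat.Partrec.Code,
      ∀ a : ℕ, c.eval (Encodable.encode a) = Part.some (@Encodable.encode (Finset ℕ) Primcodable.toEncodable (D.1 a)) := by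
    intro D
    have hD : Computable D.1 := D.2
    unfold Computable Partrec at hD
    obtain ⟨c, hc⟩ := Nat.Partrec.Code.exists_code.1 hD
    refine ⟨c, fun a => ?_⟩
    rw [hc]
    simp only [Encodable.encodek, Part.coe_some, Part.bind_some, PFun.coe_val, Part.map_some]
  refine ⟨fun D => Encodable.encode (hex D).choose, fun D₁ D₂ h => ?_⟩
  have h2 := Encodable.encode_injective h
  have h3 := (hex D₁).choose_spec
  have h4 := (hex D₂).choose_spec
  refine Subtype.ext (funext fun a => ?_)
  have := (h3 a).symm.trans (h2 ▸ h4 a)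
  rw [Part.some_inj] at this
  exact @Encodable.encode_injective (Finset ℕ) Primcodable.toEncodable _ _ this


/-- There is a bi-canonically immune set. -/
theorem exists_bi_canonically_immune :
    ∃ R : Set ℕ, CanonicallyImmune R ∧ CanonicallyImmune Rᶜ := by
  classical
  set Bad : Set (ℕ → ZMod 2) :=
    (⋃ D ∈ {D : ℕ → Finset ℕ | Computable D},
      ({x : ℕ → ZMod 2 | ({i | i < (D i).card ∧ ∀ n ∈ D i, x n = 0}).Infinite} ∪
       {x : ℕ → ZMod 2 | ({i | i < (D i).card ∧ ∀ n ∈ D i, x n = 1}).Infinite})) ∪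
    ({x : ℕ → ZMod 2 | ({n | x n = 0}).Finite} ∪ {x : ℕ → ZMod 2 | ({n | x n = 1}).Finite})
    with hBadDef
  have hBad : mu Bad = 0 := by
    refine measure_union_null ?_ (measure_union_null (finBad_null 0) (finBad_null 1))
    refine (measure_biUnion_null_iff countable_computable).2 fun D _ => ?_
    exact measure_union_null (badD_null D 0) (badD_null D 1)
  have hx : ∃ x : ℕ → ZMod 2, x ∉ Bad := by
    by_contra h
    push_neg at h
    have : mu Set.univ = 0 := by
      refine measure_mono_null (fun x _ => h x) hBad
    rw [mu_univ] at this
    exact one_ne_zero this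
  obtain ⟨x, hx⟩ := hx
  have hx1 : x ∉ {x : ℕ → ZMod 2 | ({n | x n = 1}).Finite} := fun h =>
    hx (Set.mem_union_right _ (Set.mem_union_right _ h))
  have hx0 : x ∉ {x : ℕ → ZMod 2 | ({n | x n = 0}).Finite} := fun h =>
    hx (Set.mem_union_right _ (Set.mem_union_left _ h))
  have hxD : ∀ D : ℕ → Finset ℕ, Computable D → ∀ v : ZMod 2,
      ({i | i < (D i).card ∧ ∀ n ∈ D i, x n = v}).Finite := by
    intro D hD v
    rw [← Set.not_infinite]
    intro hinf
    apply hx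
    refine Set.mem_union_left _ (Set.mem_biUnion hD ?_)
    have hv : ∀ w : ZMod 2, w = 0 ∨ w = 1 := by decide
    rcases hv v with rfl | rfl
    · exact Set.mem_union_left _ hinf
    · exact Set.mem_union_right _ hinf
  refine ⟨{n | x n = 1}, ⟨id, Computable.id, ?_, ?_⟩, ⟨id, Computable.id, ?_, ?_⟩⟩
  · exact fun h => hx1 h
  · intro D hD
    have hfin := hxD D hD.1 1
    have := hfin.eventually_cofinite_notMem
    rw [Nat.cofinite_eq_atTop] at this
    filter_upwards [this] with i hi hsub
    by_contra hcard
    exact hi ⟨by simp only [id_eq] at hcard; omega, fun n hn => hsub (Finset.mem_coe.2 hn)⟩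
  · have : {n | x n = 1}ᶜ = {n | x n = 0} := by
      ext n
      simp only [Set.mem_compl_iff, Set.mem_setOf_eq]
      revert n
      intro n
      generalize x n = v
      revert v; decide
    rw [this]
    exact fun h => hx0 h
  · intro D hD
    have hfin := hxD D hD.1 0
    have := hfin.eventually_cofinite_notMem
    rw [Nat.cofinite_eq_atTop] at this
    filter_upwards [this] with i hi hsub
    by_contra hcard
    refine hi ⟨by simp only [id_eq] at hcard; omega, fun n hn => ?_⟩
    have hmem : n ∈ {n | x n = 1}ᶜ := hsub (Finset.mem_coe.2 hn)
    simp only [Set.mem_compl_iff, Set.mem_setOf_eq] at hmem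
    revert hmem; generalize x n = v; revert v; decide
end

section
/- For every canonical numbering D, the set of Mathias conditions X_D = { [a,A] : for all i ≥ |a|, D(i) ⊆ a ∪ A implies |D(i)| ≤ i } is dense in the computable Mathias forcing partial order. -/

private theorem add_le_pair (a b : ℕ) : a + b ≤ Nat.pair a b := by
  unfold Nat.pair; split_ifs with hc
  · have hb : 0 < b := by omega
    have : b ≤ b * b := Nat.le_mul_of_pos_left b hb
    omega
  · have : a ≤ a * a + a := Nat.le_add_left a (a*a)
    omega

private theorem raise'_le (l : List ℕ) : ∀ n, ∀ x ∈ Denumerable.raise' l n,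
    x ≤ Encodable.encode l + n := by
  induction l with
  | nil => intro n x hx; simp [Denumerable.raise'] at hx
  | cons m l ih =>
    intro n x hx
    rw [Denumerable.raise'] at hx
    have he : Encodable.encode (m :: l) = Nat.pair m (Encodable.encode l) + 1 := by
      simp [Encodable.encode_list_cons]
    rcases List.mem_cons.1 hx with rfl | hx
    · have := add_le_pair m (Encodable.encode l); omega
    · have := ih (m + n + 1) x hx
      have := add_le_pair m (Encodable.encode l)
      omega

private theorem mem_le_encode (s : Finset ℕ) :
    ∀ x ∈ s, x ≤ @Encodable.encode (Finset ℕ) Denumerable.toEncodable s := by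
  intro x hx
  set n := @Encodable.encode (Finset ℕ) Denumerable.toEncodable s with hn
  have hs : s = Denumerable.ofNat (Finset ℕ) n := (Denumerable.ofNat_encode s).symm
  have hdec : Denumerable.ofNat (Finset ℕ) n =
      Finset.map (Denumerable.eqv ℕ).symm.toEmbedding
        (Denumerable.raise'Finset (Denumerable.ofNat (List ℕ) n) 0) :=
    Denumerable.ofNat_of_decode rfl
  rw [hs, hdec] at hx
  rcases Finset.mem_map.1 hx with ⟨y, hy, rfl⟩
  have hy' : y ∈ Denumerable.raise' (Denumerable.ofNat (List ℕ) n) 0 := hy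
  have h1 := raise'_le (Denumerable.ofNat (List ℕ) n) 0 y hy'
  have h2 : Encodable.encode (Denumerable.ofNat (List ℕ) n) = n := Denumerable.encode_ofNat n
  have h3 : (Denumerable.eqv ℕ).symm.toEmbedding y = y := by
    simp [Denumerable.eqv, Denumerable.ofNat_nat]
  rw [h3]; omega


private def auxM (h : ℕ → ℕ) (m : ℕ) : ℕ → ℕ
  | 0 => h m
  | k + 1 => max (auxM h m k) (h (m + k + 1))

private def auxCnt (χ : ℕ → Bool) (h : ℕ → ℕ) (m : ℕ) : ℕ → ℕ
  | 0 => 0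
  | x + 1 => auxCnt χ h m x +
      cond (χ x && decide (auxM h m (auxCnt χ h m x) < x)) 1 0

private def auxB (χ : ℕ → Bool) (h : ℕ → ℕ) (m : ℕ) (x : ℕ) : Bool :=
  χ x && decide (auxM h m (auxCnt χ h m x) < x)

private theorem auxM_mono (h : ℕ → ℕ) (m : ℕ) : Monotone (auxM h m) := by
  apply monotone_nat_of_le_succ
  intro k; exact le_max_left _ _

private theorem le_auxM (h : ℕ → ℕ) (m : ℕ) : ∀ k j, j ≤ k → h (m + j) ≤ auxM h m k := by
  intro k
  induction k with
  | zero => intro j hj; interval_cases j; simpa [auxM] using le_rfl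
  | succ k ih =>
    intro j hj
    rcases Nat.lt_or_ge j (k+1) with hlt | hge
    · exact le_trans (ih j (by omega)) (le_max_left _ _)
    · have : j = k + 1 := by omega
      subst this
      exact le_trans (le_of_eq (by ring_nf)) (le_max_right (auxM h m k) (h (m + k + 1)))

private theorem auxCnt_succ (χ : ℕ → Bool) (h : ℕ → ℕ) (m x : ℕ) :
    auxCnt χ h m (x + 1) = auxCnt χ h m x + cond (auxB χ h m x) 1 0 := rfl

private theorem auxCnt_mono (χ : ℕ → Bool) (h : ℕ → ℕ) (m : ℕ) :
    Monotone (auxCnt χ h m) := by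
  apply monotone_nat_of_le_succ
  intro x; rw [auxCnt_succ]; omega

private theorem auxCnt_lt_of_mem (χ : ℕ → Bool) (h : ℕ → ℕ) (m : ℕ) {x y : ℕ}
    (hxy : x < y) (hx : auxB χ h m x = true) :
    auxCnt χ h m x < auxCnt χ h m y := by
  have h1 : auxCnt χ h m (x + 1) = auxCnt χ h m x + 1 := by rw [auxCnt_succ, hx]; rfl
  have h2 := auxCnt_mono χ h m (show x + 1 ≤ y by omega)
  omega

private theorem auxB_spec (χ : ℕ → Bool) (h : ℕ → ℕ) (m : ℕ) {x : ℕ}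
    (hx : auxB χ h m x = true) : χ x = true ∧ auxM h m (auxCnt χ h m x) < x := by
  have := hx
  rw [auxB, Bool.and_eq_true, decide_eq_true_iff] at this
  exact this

private theorem auxCnt_const (χ : ℕ → Bool) (h : ℕ → ℕ) (m n : ℕ)
    (hall : ∀ x, n ≤ x → auxB χ h m x = false) :
    ∀ y, n ≤ y → auxCnt χ h m y = auxCnt χ h m n := by
  intro y hy
  induction y with
  | zero => have : n = 0 := by omega
            rw [this]
  | succ y ih =>
    rcases Nat.lt_or_ge y n with hlt | hge
    · have : n = y + 1 := by omega
      rw [this]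
    · rw [auxCnt_succ, hall y hge, ih hge]; simp

private theorem auxB_infinite (χ : ℕ → Bool) (h : ℕ → ℕ) (m : ℕ)
    (hinf : {x | χ x = true}.Infinite) : {x | auxB χ h m x = true}.Infinite := by
  by_contra hfin
  rw [Set.not_infinite] at hfin
  obtain ⟨n, hn⟩ := hfin.bddAbove
  have hall : ∀ x, n + 1 ≤ x → auxB χ h m x = false := by
    intro x hx
    by_contra hb
    have hmem : x ∈ {x | auxB χ h m x = true} := by
      simp only [Set.mem_setOf_eq]; exact eq_true_of_ne_false hb
    have := hn hmem
    change x ≤ n at this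
    omega
  set k := auxCnt χ h m (n + 1) with hk
  obtain ⟨x, hxχ, hxgt⟩ := hinf.exists_gt (max (n + 1) (auxM h m k))
  have hx1 : n + 1 ≤ x := by
    have := le_max_left (n + 1) (auxM h m k); omega
  have hx2 : auxM h m k < x := by
    have := le_max_right (n + 1) (auxM h m k); omega
  have hcnt : auxCnt χ h m x = k := auxCnt_const χ h m (n + 1) hall x hx1
  have : auxB χ h m x = true := by
    rw [auxB, hcnt]
    simp [Set.mem_setOf_eq] at hxχ
    simp [hxχ, hx2]
  rw [hall x hx1] at this
  exact Bool.false_ne_true this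

private theorem auxM_computable {h : ℕ → ℕ} (hh : Computable h) (m : ℕ) :
    Computable (auxM h m) := by
  have := Computable.nat_rec (f := fun k : ℕ => k) (g := fun _ : ℕ => h m)
    (h := fun _ (p : ℕ × ℕ) => max p.2 (h (m + p.1 + 1)))
    Computable.id (Computable.const (h m))
    (Computable₂.mk <| (Primrec.nat_max.to_comp.comp
        (Computable.snd.comp Computable.snd)
        (hh.comp <| (Primrec.nat_add.to_comp.comp
          (Primrec.nat_add.to_comp.comp (Computable.const m)
            (Computable.fst.comp Computable.snd)) (Computable.const 1)))))
  refine this.of_eq fun k => ?_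
  induction k with
  | zero => rfl
  | succ k ih => simp only [auxM, ← ih]

private theorem auxCnt_computable {χ : ℕ → Bool} {h : ℕ → ℕ}
    (hχ : Computable χ) (hh : Computable h) (m : ℕ) :
    Computable (auxCnt χ h m) := by
  have hM := auxM_computable hh m
  have hcond : Computable fun p : ℕ × ℕ =>
      (χ p.1 && decide (auxM h m p.2 < p.1)) := by
    exact (Primrec.dom_bool₂ (· && ·)).to_comp.comp (hχ.comp Computable.fst)
      (Primrec.nat_lt.decide.to_comp.comp (hM.comp Computable.snd) Computable.fst)
  have := Computable.nat_rec (f := fun k : ℕ => k) (g := fun _ : ℕ => 0)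
    (h := fun _ (p : ℕ × ℕ) =>
      p.2 + cond (χ p.1 && decide (auxM h m p.2 < p.1)) 1 0)
    Computable.id (Computable.const 0)
    (Computable₂.mk <| Primrec.nat_add.to_comp.comp
      (Computable.snd.comp Computable.snd)
      (Computable.cond (hcond.comp Computable.snd)
        (Computable.const 1) (Computable.const 0)))
  refine this.of_eq fun x => ?_
  induction x with
  | zero => rfl
  | succ x ih => simp only [auxCnt, ← ih]

private theorem auxB_computable {χ : ℕ → Bool} {h : ℕ → ℕ}
    (hχ : Computable χ) (hh : Computable h) (m : ℕ) :
    Computable (auxB χ h m) := by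
  have hM := auxM_computable hh m
  have hC := auxCnt_computable hχ hh m
  exact (Primrec.dom_bool₂ (· && ·)).to_comp.comp hχ
    (Primrec.nat_lt.decide.to_comp.comp (hM.comp hC) Computable.id)


private theorem aux_card_le (χ : ℕ → Bool) (h : ℕ → ℕ) (m i : ℕ) (hi : m ≤ i)
    (s : Finset ℕ) (hb : ∀ x ∈ s, auxB χ h m x = true)
    (hle : ∀ x ∈ s, x ≤ h i) : s.card ≤ i - m := by
  have := Finset.card_le_card_of_injOn (auxCnt χ h m)
    (t := Finset.range (i - m)) ?_ ?_ (s := s)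
  · simpa using this
  · intro x hx
    rw [Finset.mem_coe, Finset.mem_range]
    by_contra hc
    push_neg at hc
    have h1 := (auxB_spec χ h m (hb x hx)).2
    have h2 : auxM h m (i - m) ≤ auxM h m (auxCnt χ h m x) := auxM_mono h m hc
    have h3 : h i ≤ auxM h m (i - m) := by
      have := le_auxM h m (i - m) (i - m) le_rfl
      rwa [Nat.add_sub_cancel' hi] at this
    have h4 := hle x hx
    omega
  · intro x hx y hy hxy
    rcases lt_trichotomy x y with hlt | heq | hgt
    · exact absurd hxy (Nat.ne_of_lt (auxCnt_lt_of_mem χ h m hlt (hb x hx)))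
    · exact heq
    · exact absurd hxy.symm (Nat.ne_of_lt (auxCnt_lt_of_mem χ h m hgt (hb y hy)))

/-- For each canonical numbering `D`, the family
`X_D = {[a,A] : ∀ i ≥ |a|, D(i) ⊆ a ∪ A → |D(i)| ≤ i}` of Mathias conditions is dense. -/
theorem XD_dense :
    ∀ D : ℕ → Finset ℕ, CanonicalNumbering D →
      MathiasDense {c : MathiasCond |
        ∀ i, c.a.card ≤ i → ↑(D i) ⊆ (↑c.a ∪ c.A : Set ℕ) → (D i).card ≤ i} := by
  intro D hCN c
  obtain ⟨hD, -⟩ := hCN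
  obtain ⟨χ, hχcomp, hχeq⟩ := ComputablePred.computable_iff.1 c.comp
  have hmemA : ∀ x, x ∈ c.A ↔ χ x = true := fun x => by
    constructor
    · intro hx; have := congrFun hχeq x; rw [← this]; exact hx
    · intro hx; have := congrFun hχeq x; rw [this]; exact hx
  set h : ℕ → ℕ := fun j => @Encodable.encode (Finset ℕ) Denumerable.toEncodable (D j) with hh_def
  have hh : Computable h := Computable.encode.comp hD
  set m : ℕ := c.a.card with hm_def
  set B : Set ℕ := {x | auxB χ h m x = true} with hB_def
  have hBsubA : B ⊆ c.A := by
    intro x hx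
    exact (hmemA x).2 (auxB_spec χ h m hx).1
  have hBinf : B.Infinite := by
    apply auxB_infinite
    have : {x | χ x = true} = c.A := by
      ext x; exact (hmemA x).symm
    rw [this]; exact c.infinite
  have hBcomp : ComputablePred (· ∈ B) := by
    refine ComputablePred.computable_iff.2 ⟨auxB χ h m, auxB_computable hχcomp hh m, ?_⟩
    rfl
  refine ⟨⟨c.a, B, hBinf, hBcomp, fun x hx y hy => c.lt x hx y (hBsubA hy)⟩, ?_, ?_⟩
  · -- membership in the family
    intro i him hsub
    simp only at him hsub ⊢
    have hsplit := Finset.card_filter_add_card_filter_not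
      (s := D i) (p := fun x => x ∈ c.a)
    have h1 : ((D i).filter (fun x => x ∈ c.a)).card ≤ m := by
      apply Finset.card_le_card
      intro x hx
      exact (Finset.mem_filter.1 hx).2
    have h2 : ((D i).filter (fun x => ¬ x ∈ c.a)).card ≤ i - m := by
      apply aux_card_le χ h m i him
      · intro x hx
        rcases Finset.mem_filter.1 hx with ⟨hxD, hxa⟩
        rcases hsub (Finset.mem_coe.2 hxD) with hxc | hxB
        · exact absurd hxc hxa
        · exact hxB
      · intro x hx
        exact mem_le_encode (D i) x (Finset.mem_filter.1 hx).1
    omega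
  · -- extension
    refine ⟨Finset.Subset.refl _, ?_, hBsubA⟩
    intro x hx
    simp only [Set.mem_diff, Finset.mem_coe] at hx
    exact absurd hx.1 hx.2
end

section
/- Every canonically immune set contains an infinite subset which is both canonically immune and effectively immune. -/
namespace CIAux

open Denumerable
open Nat.Partrec (Code)
open Nat.Partrec.Code

lemma filterMap_cond_eq_filter (p : ℕ → Bool) :
    ∀ l : List ℕ, l.filterMap (fun n => cond (p n) (some n) none) = l.filter p := by
  intro l
  induction l with
  | nil => rfl
  | cons a l ih =>
    rw [List.filterMap_cons, List.filter_cons]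
    cases hp : p a <;> simp [hp, ih]


/-- foldl step implementing `Denumerable.lower'`. -/
def lowStep : ℕ × List ℕ → ℕ → ℕ × List ℕ := fun st cur => (cur + 1, (cur - st.1) :: st.2)

lemma foldl_lower' (l : List ℕ) : ∀ (n : ℕ) (acc : List ℕ),
    (l.foldl lowStep (n, acc)).2.reverse = acc.reverse ++ Denumerable.lower' l n := by
  induction l with
  | nil => intro n acc; simp [Denumerable.lower']
  | cons m l ih =>
    intro n acc
    simp only [List.foldl_cons, Denumerable.lower', lowStep, ih]
    simp

/-- Encode a strictly sorted list as a natural number coding the corresponding finset. -/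
def enc (l : List ℕ) : ℕ := Encodable.encode ((l.foldl lowStep (0, [])).2.reverse)

lemma enc_eq (l : List ℕ) : enc l = Encodable.encode (Denumerable.lower' l 0) := by
  simp [enc, foldl_lower' l 0 []]

lemma enc_primrec : Primrec enc := by
  have h1 : Primrec (fun q : List ℕ × ((ℕ × List ℕ) × ℕ) => lowStep q.2.1 q.2.2) :=
    Primrec.pair (Primrec.succ.comp (Primrec.snd.comp Primrec.snd))
      (Primrec.list_cons.comp
        (Primrec.nat_sub.comp (Primrec.snd.comp Primrec.snd)
          (Primrec.fst.comp (Primrec.fst.comp Primrec.snd)))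
        (Primrec.snd.comp (Primrec.fst.comp Primrec.snd)))
  have h1' : Primrec₂ (fun (_ : List ℕ) (p : (ℕ × List ℕ) × ℕ) => lowStep p.1 p.2) := h1
  have h2 : Primrec (fun l : List ℕ => (l.foldl lowStep (0, ([] : List ℕ))).2.reverse) :=
    Primrec.list_reverse.comp (Primrec.snd.comp
      (Primrec.list_foldl Primrec.id (Primrec.const ((0 : ℕ), ([] : List ℕ))) h1'))
  exact Primrec.encode.comp h2

lemma ofNat_enc {l : List ℕ} (hl : List.Pairwise (· < ·) l) :
    (Denumerable.ofNat (Finset ℕ) (enc l)) =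
      ⟨(l : Multiset ℕ), by exact Multiset.coe_nodup.2 (hl.imp ne_of_lt)⟩ := by
  have hraise : Denumerable.raise' (Denumerable.lower' l 0) 0 = l :=
    Denumerable.raise_lower' (fun m _ => Nat.zero_le m) hl.sortedLT
  have h0 : Denumerable.ofNat (Finset ℕ) (enc l) =
      Finset.map (Denumerable.eqv ℕ).symm.toEmbedding
        (Denumerable.raise'Finset (Denumerable.ofNat (List ℕ) (enc l)) 0) :=
    Denumerable.ofNat_of_decode (by with_unfolding_all rfl)
  rw [h0, enc_eq, Denumerable.ofNat_encode]
  ext x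
  simp only [Finset.mem_map, Equiv.coe_toEmbedding]
  constructor
  · rintro ⟨y, hy, rfl⟩
    have : y ∈ Denumerable.raise' (Denumerable.lower' l 0) 0 := hy
    rw [hraise] at this
    simpa [Denumerable.eqv] using this
  · intro hx
    refine ⟨x, ?_, by simp [Denumerable.eqv]⟩
    show x ∈ Denumerable.raise'Finset (Denumerable.lower' l 0) 0
    unfold Denumerable.raise'Finset
    rw [Finset.mem_mk, hraise] at *
    exact Finset.mem_mk.2 (Multiset.mem_coe.2 (by rw [Denumerable.raise_lower' (fun m _ => Nat.zero_le m) hl.sortedLT]; exact Multiset.mem_coe.1 hx))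

lemma ofNat_enc_mem {l : List ℕ} (hl : List.Pairwise (· < ·) l) (x : ℕ) :
    x ∈ Denumerable.ofNat (Finset ℕ) (enc l) ↔ x ∈ l := by
  rw [ofNat_enc hl]; exact Multiset.mem_coe

lemma ofNat_enc_card {l : List ℕ} (hl : List.Pairwise (· < ·) l) :
    (Denumerable.ofNat (Finset ℕ) (enc l)).card = l.length := by
  rw [ofNat_enc hl]; rfl


/-- Stage-`s` approximation to `WSet`-style sets, as a sorted list. -/
def stageList (c : Code) (s : ℕ) : List ℕ :=
  (List.range s).filter (fun n => (evaln s c n).isSome)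

lemma stageList_primrec (c : Code) : Primrec (stageList c) := by
  have hev : Primrec (fun x : ℕ × ℕ => (evaln x.1 c x.2).isSome) :=
    Primrec.option_isSome.comp (primrec_evaln.comp
      (Primrec.pair (Primrec.pair Primrec.fst (Primrec.const c)) Primrec.snd))
  have hg : Primrec₂ (fun (s n : ℕ) => cond ((evaln s c n).isSome) (some n) none) :=
    Primrec.cond hev (Primrec.option_some.comp Primrec.snd) (Primrec.const none)
  have := Primrec.listFilterMap Primrec.list_range hg
  exact this.of_eq fun s => filterMap_cond_eq_filter _ _

lemma stageList_sorted (c : Code) (s : ℕ) : List.Pairwise (· < ·) (stageList c s) :=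
  (List.pairwise_lt_range (n := s)).filter _

lemma stageList_mem {c : Code} {s x : ℕ} (hx : x ∈ stageList c s) : (c.eval x).Dom := by
  have := (List.mem_filter.1 hx).2
  obtain ⟨y, hy⟩ := Option.isSome_iff_exists.1 (by simpa using this)
  exact Part.dom_iff_mem.2 ⟨y, evaln_sound hy⟩

lemma stageList_long {c : Code} (hinf : {n | (c.eval n).Dom}.Infinite) (m : ℕ) :
    ∃ s, m < (stageList c s).length := by
  obtain ⟨T, hTsub, hTcard⟩ := hinf.exists_subset_card_eq (m + 1)
  have hex : ∀ n : ℕ, ∃ k, n ∈ T → (evaln k c n).isSome := by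
    intro n
    by_cases hn : n ∈ T
    · have hdom : (c.eval n).Dom := hTsub hn
      obtain ⟨k, hk⟩ := evaln_complete.1 (Part.get_mem hdom)
      exact ⟨k, fun _ => Option.isSome_iff_exists.2 ⟨_, hk⟩⟩
    · exact ⟨0, fun h => absurd h hn⟩
  choose f hf using hex
  set s := (T.sup f) + (T.sup id) + 1 with hs
  have hsubL : T ⊆ (stageList c s).toFinset := by
    intro n hn
    rw [List.mem_toFinset]
    apply List.mem_filter.2
    constructor
    · apply List.mem_range.2
      have : n ≤ T.sup id := Finset.le_sup (f := id) hn
      omega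
    · have h1 : (evaln (f n) c n).isSome := hf n hn
      obtain ⟨y, hy⟩ := Option.isSome_iff_exists.1 h1
      have : f n ≤ s := by
        have := Finset.le_sup (f := f) hn; omega
      simpa using Option.isSome_iff_exists.2 ⟨y, evaln_mono this hy⟩
  refine ⟨s, ?_⟩
  calc m < T.card := by omega
    _ ≤ (stageList c s).toFinset.card := Finset.card_le_card hsubL
    _ ≤ (stageList c s).length := (stageList c s).toFinset_card_le


lemma wset_finite_of_canonImmune {R : Set ℕ} {h : ℕ → ℕ} (hh : Computable h)
    (him : CanonImmuneMod R h) {e : ℕ} (hsub : WSet e ⊆ R) : (WSet e).Finite := by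
  by_contra hfin
  set c := Denumerable.ofNat Nat.Partrec.Code e with hc
  have hinf : {n | (c.eval n).Dom}.Infinite := hfin
  have Hex : ∀ t : ℕ, ∃ s, h (Nat.pair 0 t) < (stageList c s).length :=
    fun t => stageList_long hinf _
  set pred : ℕ → ℕ → Bool :=
    fun i s => decide (h (Nat.pair 0 i.unpair.2) < (stageList c s).length) with hpreddef
  set nf : ℕ → ℕ := fun i =>
    if i.unpair.1 = 0 then enc (stageList c (Nat.find (Hex i.unpair.2))) else i.unpair.2
    with hnfdef
  set D : ℕ → Finset ℕ := fun i => Denumerable.ofNat (Finset ℕ) (nf i) with hDdef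
  -- computability of nf
  have hpredC : Computable₂ pred := by
    have hlt : Computable₂ (fun a b : ℕ => decide (a < b)) := Primrec.nat_lt.decide.to_comp
    exact hlt.comp
      (hh.comp ((Primrec₂.natPair.comp (Primrec.const 0)
        (Primrec.snd.comp (Primrec.unpair.comp Primrec.fst))).to_comp))
      ((Primrec.list_length.comp ((stageList_primrec c).comp Primrec.snd)).to_comp)
  have hp : Partrec₂ (fun i : ℕ => ((pred i : ℕ → Bool) : ℕ →. Bool)) := hpredC.partrec₂
  have hrf : Partrec (fun i : ℕ => Nat.rfind ((pred i : ℕ → Bool) : ℕ →. Bool)) :=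
    Partrec.rfind hp
  have hmap : Partrec (fun i : ℕ =>
      (Nat.rfind ((pred i : ℕ → Bool) : ℕ →. Bool)).map (fun s => enc (stageList c s))) :=
    hrf.map (((enc_primrec.comp (stageList_primrec c)).to_comp).comp Computable.snd).to₂
  have hcase : Computable (fun i : ℕ => if i.unpair.1 = 0 then 1 else 0) := by
    have : PrimrecPred (fun i : ℕ => i.unpair.1 = 0) :=
      Primrec.eq.comp (Primrec.fst.comp Primrec.unpair) (Primrec.const 0)
    exact (Primrec.ite this (Primrec.const 1) (Primrec.const 0)).to_comp
  have hsnd : Computable (fun i : ℕ => i.unpair.2) :=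
    (Primrec.snd.comp Primrec.unpair).to_comp
  have hPF : Partrec (fun i : ℕ =>
      (if i.unpair.1 = 0 then 1 else 0 : ℕ).casesOn
        (Part.some i.unpair.2)
        (fun _ => (Nat.rfind ((pred i : ℕ → Bool) : ℕ →. Bool)).map
          (fun s => enc (stageList c s)))) := by
    exact Partrec.nat_casesOn_right hcase hsnd (hmap.comp Computable.fst)
  have hnf : Computable nf := by
    apply hPF.of_eq_tot
    intro i
    by_cases h0 : i.unpair.1 = 0
    · rw [if_pos h0]
      show nf i ∈ (Nat.rfind _).map _
      rw [Part.mem_map_iff]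
      refine ⟨Nat.find (Hex i.unpair.2), Nat.mem_rfind.2 ⟨?_, ?_⟩, ?_⟩
      · exact Part.mem_some_iff.2 (decide_eq_true (Nat.find_spec (Hex i.unpair.2))).symm
      · intro m hm
        exact Part.mem_some_iff.2 (decide_eq_false (Nat.find_min (Hex i.unpair.2) hm)).symm
      · rw [hnfdef]; simp only [h0, if_pos]
    · rw [if_neg h0]
      show nf i ∈ Part.some i.unpair.2
      rw [hnfdef]
      simp [h0]
  have hD : Computable D := ((Primrec.ofNat (Finset ℕ)).to_comp).comp hnf
  have hsurj : Function.Surjective D := by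
    intro F
    set m := @Encodable.encode (Finset ℕ) Denumerable.toEncodable F with hm
    refine ⟨Nat.pair 1 m, ?_⟩
    have h1 : nf (Nat.pair 1 m) = m := by
      rw [hnfdef]
      simp [Nat.unpair_pair]
    show Denumerable.ofNat (Finset ℕ) (nf (Nat.pair 1 m)) = F
    rw [h1, hm]
    exact Denumerable.ofNat_encode F
  obtain ⟨N, hN⟩ := Filter.eventually_atTop.1 (him.2 D ⟨hD, hsurj⟩)
  have hiN : N ≤ Nat.pair 0 N := Nat.right_le_pair 0 N
  have hnfi : nf (Nat.pair 0 N) = enc (stageList c (Nat.find (Hex N))) := by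
    rw [hnfdef]; simp [Nat.unpair_pair]
  have hsort := stageList_sorted c (Nat.find (Hex N))
  have hDi : D (Nat.pair 0 N) = Denumerable.ofNat (Finset ℕ) (enc (stageList c (Nat.find (Hex N)))) := by
    show Denumerable.ofNat (Finset ℕ) (nf (Nat.pair 0 N)) = _
    rw [hnfi]
  have hsubR : ↑(D (Nat.pair 0 N)) ⊆ R := by
    intro x hx
    rw [Finset.mem_coe, hDi, ofNat_enc_mem hsort] at hx
    exact hsub (stageList_mem hx)
  have hcard : (D (Nat.pair 0 N)).card = (stageList c (Nat.find (Hex N))).length := by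
    rw [hDi, ofNat_enc_card hsort]
  have hle := hN (Nat.pair 0 N) hiN hsubR
  rw [hcard] at hle
  exact absurd (Nat.find_spec (Hex N)) (not_lt.2 hle)


end CIAux

/-- Every canonically immune set contains an infinite subset which is both canonically
immune and effectively immune. -/
theorem canonically_immune_contains_effectively_immune :
    ∀ R : Set ℕ, CanonicallyImmune R →
      ∃ Q : Set ℕ, Q ⊆ R ∧ Q.Infinite ∧ CanonicallyImmune Q ∧ EffectivelyImmune Q := by
  classical
  rintro R ⟨h, hh, him⟩
  obtain ⟨hRinf, hRmod⟩ := him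
  set M : ℕ → ℕ := fun e => if hf : (WSet e).Finite then hf.toFinset.sup id else 0 with hM
  set B : ℕ → ℕ := fun k => (Finset.range (k + 1)).sup M with hB
  have hexgt : ∀ n : ℕ, ∃ m ∈ R, n < m := fun n => hRinf.exists_gt n
  set q : ℕ → ℕ := fun k => Nat.rec (Classical.choose (hexgt (B 0)))
      (fun k qk => Classical.choose (hexgt (max qk (B (k + 1))))) k with hq
  have hq0 : q 0 = Classical.choose (hexgt (B 0)) := rfl
  have hqs : ∀ k, q (k + 1) = Classical.choose (hexgt (max (q k) (B (k + 1)))) := fun k => rfl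
  have hqR : ∀ k, q k ∈ R := by
    intro k
    cases k with
    | zero => rw [hq0]; exact (Classical.choose_spec (hexgt (B 0))).1
    | succ k => rw [hqs k]; exact (Classical.choose_spec (hexgt (max (q k) (B (k + 1))))).1
  have hqB : ∀ k, B k < q k := by
    intro k
    cases k with
    | zero => rw [hq0]; exact (Classical.choose_spec (hexgt (B 0))).2
    | succ k =>
      rw [hqs k]
      exact lt_of_le_of_lt (le_max_right _ _)
        (Classical.choose_spec (hexgt (max (q k) (B (k + 1))))).2
  have hqmono : StrictMono q := by
    apply strictMono_nat_of_lt_succ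
    intro k
    rw [hqs k]
    exact lt_of_le_of_lt (le_max_left _ _)
      (Classical.choose_spec (hexgt (max (q k) (B (k + 1))))).2
  set Q : Set ℕ := Set.range q with hQ
  have hQsubR : Q ⊆ R := by rintro x ⟨k, rfl⟩; exact hqR k
  have hQinf : Q.Infinite := Set.infinite_range_of_injective hqmono.injective
  refine ⟨Q, hQsubR, hQinf, ⟨h, hh, hQinf, fun D hD => (hRmod D hD).mono
    (fun i hi hQi => hi (fun x hx => hQsubR (hQi hx)))⟩, hQinf, (fun e => e + 1),
    Computable.succ, fun e hsubQ => ?_⟩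
  have hsubR : WSet e ⊆ R := hsubQ.trans hQsubR
  have hfin := CIAux.wset_finite_of_canonImmune hh ⟨hRinf, hRmod⟩ hsubR
  refine ⟨hfin, ?_⟩
  rw [Set.ncard_eq_toFinset_card _ hfin]
  by_contra hgt
  push_neg at hgt
  have hidx : ∀ x : ℕ, ∃ k, x ∈ hfin.toFinset → q k = x := by
    intro x
    by_cases hx : x ∈ hfin.toFinset
    · obtain ⟨k, hk⟩ := hsubQ (hfin.mem_toFinset.1 hx)
      exact ⟨k, fun _ => hk⟩
    · exact ⟨0, fun hmem => absurd hmem hx⟩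
  choose idx hidx2 using hidx
  have hcardI : (hfin.toFinset.image idx).card = hfin.toFinset.card :=
    Finset.card_image_of_injOn (fun x hx y hy hxy => by
      rw [← hidx2 x hx, ← hidx2 y hy, hxy])
  have hbig : ∃ k ∈ hfin.toFinset.image idx, e + 1 ≤ k := by
    by_contra hall
    push_neg at hall
    have hsubr : hfin.toFinset.image idx ⊆ Finset.range (e + 1) :=
      fun k hk => Finset.mem_range.2 (hall k hk)
    have := Finset.card_le_card hsubr
    rw [hcardI, Finset.card_range] at this
    omega
  obtain ⟨k, hkmem, hke⟩ := hbig
  obtain ⟨x, hxF, rfl⟩ := Finset.mem_image.1 hkmem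
  have hx_eq : q (idx x) = x := hidx2 x hxF
  have h1 : q (e + 1) ≤ q (idx x) := hqmono.monotone hke
  have h2 : B (e + 1) < q (e + 1) := hqB (e + 1)
  have h3 : M e ≤ B (e + 1) := by
    rw [hB]
    exact Finset.le_sup (Finset.mem_range.2 (by omega))
  have h4 : x ≤ M e := by
    rw [hM]
    simp only []
    rw [dif_pos hfin]
    exact Finset.le_sup (f := id) hxF
  omega
end
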